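/- Fix m > 0 and let 𝒞 = {C ∈ ℝ : the smooth nonnegative solution v_C of the ODE IVP exists on all of [1, m+1]}. Then (−∞, 2] ⊆ 𝒞, and v_C(m+1) → ∞ as C → −∞. -/

import Mathlib

open Set Filter

/-- The coefficient `A(C)` from the paper (depending on `m`). -/
noncomputable def Acoef (m C : ℝ) : ℝ :=
  3 * C / m * (1 - 1 / (m + 1) ^ 2) - 6 / m * (1 + 1 / (m + 1) ^ 2)

/-- The coefficient `B(C)` from the paper (depending on `m`). -/
noncomputable def Bcoef (m C : ℝ) : ℝ :=
  -2 * C * (1 + 1 / m - 1 / (m * (m + 1) ^ 2)) + 4 * (1 + 1 / m + 1 / (m * (m + 1) ^ 2))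

/-- The polynomial `p_C(γ) = A(C)·γ³/3 + B(C)·γ²/2 + C`. -/
noncomputable def pC (m C γ : ℝ) : ℝ :=
  Acoef m C * γ ^ 3 / 3 + Bcoef m C * γ ^ 2 / 2 + C

/-- The right-hand side `2√2·√(v γ) + p_C(γ)·γ` of the ODE. -/
noncomputable def odeRHS (m C : ℝ) (v : ℝ → ℝ) (γ : ℝ) : ℝ :=
  2 * Real.sqrt 2 * Real.sqrt (v γ) + pC m C γ * γ

/-- `v` is a `C¹` nonnegative solution of the ODE IVP
`v' = 2√2·√v + p_C(γ)·γ`, `v 1 = 2`, on the set `S`. -/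
def IsSolOn (m C : ℝ) (v : ℝ → ℝ) (S : Set ℝ) : Prop :=
  v 1 = 2 ∧ ∀ γ ∈ S, 0 ≤ v γ ∧ HasDerivWithinAt v (odeRHS m C v γ) S γ

/-- `v` is a solution of the IVP on `S` which cannot be continued to any strictly
larger subinterval of `[1, m+1]`, i.e. `S` is the maximal interval of existence. -/
def IsMaxSolOn (m C : ℝ) (v : ℝ → ℝ) (S : Set ℝ) : Prop :=
  IsSolOn m C v S ∧
    ∀ T : Set ℝ, T ⊆ Set.Icc 1 (m + 1) → T.OrdConnected → S ⊆ T → S ≠ T →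
      ¬∃ w : ℝ → ℝ, IsSolOn m C w T ∧ ∀ γ ∈ S, w γ = v γ

/- ### Auxiliary material -/

open Topology

/-- The antiderivative of `γ ↦ p_C(γ)·γ`. -/
noncomputable def Pfun (m C γ : ℝ) : ℝ :=
  Acoef m C * γ ^ 5 / 15 + Bcoef m C * γ ^ 4 / 8 + C * γ ^ 2 / 2

lemma hasDerivAt_Pfun (m C γ : ℝ) :
    HasDerivAt (fun x => Pfun m C x) (pC m C γ * γ) γ := by
  have h : HasDerivAt (fun x : ℝ => Acoef m C * x ^ 5 / 15 + Bcoef m C * x ^ 4 / 8 + C * x ^ 2 / 2)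
      (Acoef m C * (↑5 * γ ^ 4) / 15 + Bcoef m C * (↑4 * γ ^ 3) / 8 + C * (↑2 * γ ^ 1) / 2) γ :=
    ((((hasDerivAt_pow 5 γ).const_mul (Acoef m C)).div_const 15).add
      (((hasDerivAt_pow 4 γ).const_mul (Bcoef m C)).div_const 8)).add
      (((hasDerivAt_pow 2 γ).const_mul C).div_const 2)
  have he : pC m C γ * γ
      = Acoef m C * (↑5 * γ ^ 4) / 15 + Bcoef m C * (↑4 * γ ^ 3) / 8 + C * (↑2 * γ ^ 1) / 2 := by
    unfold pC; push_cast; ring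
  unfold Pfun
  rw [he]
  exact h

/-- The crucial sign property of the data: for `C ≤ 2` the antiderivative of `p_C(γ)·γ`
is nondecreasing in the aggregate sense needed: `P(γ) ≥ P(1)` on `[1, m+1]`. -/
lemma Pfun_sub_nonneg (m C γ : ℝ) (hm : 0 < m) (hC : C ≤ 2) (h1 : 1 ≤ γ) (h2 : γ ≤ m + 1) :
    0 ≤ Pfun m C γ - Pfun m C 1 := by
  have hm0 : m ≠ 0 := ne_of_gt hm
  have hM0 : (m + 1) ≠ 0 := by nlinarith
  have key : Pfun m C γ - Pfun m C 1 =
      ((γ-1) * (240*(m+1-γ) + 480*(m+1-γ)^2 + 240*(m+1-γ)^3 + 1080*(γ-1)*(m+1-γ)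
        + 960*(γ-1)*(m+1-γ)^2 + 120*(γ-1)*(m+1-γ)^3 + 120*(γ-1)^2 + 1200*(γ-1)^2*(m+1-γ)
        + 360*(γ-1)^2*(m+1-γ)^2 + 120*(γ-1)^3 + 360*(γ-1)^3*(m+1-γ) + 24*(γ-1)^4)
       + (2-C) * (γ-1)^2 * (180*(m+1-γ)^2 + 120*(m+1-γ)^3 + 240*(γ-1)*(m+1-γ)
        + 480*(γ-1)*(m+1-γ)^2 + 120*(γ-1)*(m+1-γ)^3 + 60*(γ-1)^2 + 450*(γ-1)^2*(m+1-γ)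
        + 330*(γ-1)^2*(m+1-γ)^2 + 30*(γ-1)^2*(m+1-γ)^3 + 90*(γ-1)^3 + 252*(γ-1)^3*(m+1-γ)
        + 66*(γ-1)^3*(m+1-γ)^2 + 42*(γ-1)^4 + 42*(γ-1)^4*(m+1-γ) + 6*(γ-1)^5))
      / (120 * m * (m+1)^2) := by
    unfold Pfun Acoef Bcoef
    field_simp
    ring
  rw [key]
  apply div_nonneg _ (by positivity)
  have hs : 0 ≤ γ - 1 := by linarith
  have hu : 0 ≤ m + 1 - γ := by linarith
  have hc : 0 ≤ 2 - C := by linarith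
  obtain ⟨a, ha⟩ : ∃ a : ℝ, γ - 1 = a ^ 2 := ⟨Real.sqrt (γ-1), (Real.sq_sqrt hs).symm⟩
  obtain ⟨b, hb⟩ : ∃ b : ℝ, m + 1 - γ = b ^ 2 := ⟨Real.sqrt (m+1-γ), (Real.sq_sqrt hu).symm⟩
  obtain ⟨c, hcc⟩ : ∃ c : ℝ, 2 - C = c ^ 2 := ⟨Real.sqrt (2-C), (Real.sq_sqrt hc).symm⟩
  rw [ha, hb, hcc]
  positivity

/-- Quantitative version at the right endpoint. -/
lemma Pfun_M_lower (m C : ℝ) (hm : 0 < m) (hC : C ≤ 2) :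
    (2 - C) * (m ^ 3 / (2 * (m + 1) ^ 2)) ≤ Pfun m C (m + 1) - Pfun m C 1 := by
  have hm0 : m ≠ 0 := ne_of_gt hm
  have hM0 : (m + 1) ≠ 0 := by nlinarith
  have hid : Pfun m C (m+1) - Pfun m C 1 - (2-C) * (m ^ 3 / (2 * (m + 1) ^ 2)) =
      (120*m^3 + 120*m^4 + 24*m^5 + (2-C)*(90*m^5 + 42*m^6 + 6*m^7)) / (120*m*(m+1)^2) := by
    unfold Pfun Acoef Bcoef
    field_simp
    ring
  have h2C : 0 ≤ 2 - C := by linarith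
  have hnum : 0 ≤ (2-C)*(90*m^5 + 42*m^6 + 6*m^7) := mul_nonneg h2C (by positivity)
  have : 0 ≤ (120*m^3 + 120*m^4 + 24*m^5 + (2-C)*(90*m^5 + 42*m^6 + 6*m^7)) / (120*m*(m+1)^2) :=
    div_nonneg (by linarith [hnum, (by positivity : (0:ℝ) ≤ 120*m^3 + 120*m^4 + 24*m^5)])
      (by positivity)
  linarith [hid]

/-- A strict lower-barrier lemma: if `f` starts above `φ` and at every contact point the
vector field of `f` strictly dominates that of `φ`, then `f` stays above `φ`. -/
lemma barrier {M : ℝ} (hM : 1 < M) (f φ F Φ : ℝ → ℝ)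
    (hf : ∀ γ ∈ Icc 1 M, HasDerivWithinAt f (F γ) (Icc 1 M) γ)
    (hφ : ∀ γ ∈ Icc 1 M, HasDerivWithinAt φ (Φ γ) (Icc 1 M) γ)
    (hinit : φ 1 < f 1)
    (hcmp : ∀ γ ∈ Icc 1 M, f γ = φ γ → Φ γ < F γ) :
    ∀ γ ∈ Icc 1 M, φ γ ≤ f γ := by
  by_contra hcon
  push_neg at hcon
  obtain ⟨γ₀, hγ₀, hlt⟩ := hcon
  set h : ℝ → ℝ := fun γ => f γ - φ γ with hh
  have hcont : ContinuousOn h (Icc 1 M) := fun γ hγ =>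
    ((hf γ hγ).continuousWithinAt.sub (hφ γ hγ).continuousWithinAt)
  have hSclosed : IsClosed (Icc 1 M ∩ h ⁻¹' (Iic 0)) :=
    hcont.preimage_isClosed_of_isClosed isClosed_Icc isClosed_Iic
  have hSne : (Icc 1 M ∩ h ⁻¹' (Iic 0)).Nonempty := ⟨γ₀, hγ₀, by simp [hh]; linarith⟩
  have hSbdd : BddBelow (Icc 1 M ∩ h ⁻¹' (Iic 0)) := ⟨1, fun x hx => hx.1.1⟩
  set t := sInf (Icc 1 M ∩ h ⁻¹' (Iic 0)) with ht
  have htS : t ∈ Icc 1 M ∩ h ⁻¹' (Iic 0) := hSclosed.csInf_mem hSne hSbdd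
  have htIcc : t ∈ Icc 1 M := htS.1
  have ht0 : h t ≤ 0 := htS.2
  have h1pos : 0 < h 1 := sub_pos.mpr hinit
  have ht1 : 1 < t := by
    rcases eq_or_lt_of_le htIcc.1 with he | hl
    · exfalso; rw [← he] at ht0; linarith
    · exact hl
  have hpos : ∀ γ ∈ Ico 1 t, 0 < h γ := by
    intro γ hγ
    by_contra hng
    push_neg at hng
    have hmem : γ ∈ Icc 1 M ∩ h ⁻¹' (Iic 0) := ⟨⟨hγ.1, le_trans hγ.2.le htIcc.2⟩, hng⟩
    exact (notMem_of_lt_csInf hγ.2 hSbdd) hmem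
  haveI hneB : (𝓝[Ico 1 t] t).NeBot := right_nhdsWithin_Ico_neBot ht1
  have hht : h t = 0 := by
    refine le_antisymm ht0 ?_
    have htend : Tendsto h (𝓝[Ico 1 t] t) (𝓝 (h t)) :=
      (hcont t htIcc).mono
        (fun x (hx : x ∈ Ico 1 t) => ⟨hx.1, le_trans hx.2.le htIcc.2⟩)
    exact ge_of_tendsto htend (eventually_of_mem self_mem_nhdsWithin
      (fun γ hγ => (hpos γ hγ).le))
  have hfφ : f t = φ t := by simp [hh] at hht; linarith
  have hd : Φ t < F t := hcmp t htIcc hfφ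
  have hder : HasDerivWithinAt h (F t - Φ t) (Icc 1 t) t :=
    ((hf t htIcc).sub (hφ t htIcc)).mono (Icc_subset_Icc le_rfl htIcc.2)
  rw [hasDerivWithinAt_iff_tendsto_slope, Icc_sdiff_right] at hder
  have hle : F t - Φ t ≤ 0 := by
    refine le_of_tendsto hder (eventually_of_mem self_mem_nhdsWithin fun γ hγ => ?_)
    have h1 : 0 < h γ := hpos γ hγ
    have h2 : γ - t < 0 := sub_neg.mpr hγ.2
    have hsl : slope h t γ = h γ / (γ - t) := by
      rw [slope_def_field, hht]; ring
    rw [hsl]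
    exact div_nonpos_of_nonneg_of_nonpos h1.le h2.le
  linarith

lemma sqrtmax_lip (x y : ℝ) :
    |Real.sqrt (max x 1) - Real.sqrt (max y 1)| * 2 ≤ |x - y| := by
  set sa := Real.sqrt (max x 1) with hsa
  set sb := Real.sqrt (max y 1) with hsb
  have hma : (0:ℝ) ≤ max x 1 := le_trans zero_le_one (le_max_right _ _)
  have hmb : (0:ℝ) ≤ max y 1 := le_trans zero_le_one (le_max_right _ _)
  have ha : sa ^ 2 = max x 1 := Real.sq_sqrt hma
  have hb : sb ^ 2 = max y 1 := Real.sq_sqrt hmb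
  have h1a : 1 ≤ sa := Real.one_le_sqrt.mpr (le_max_right _ _)
  have h1b : 1 ≤ sb := Real.one_le_sqrt.mpr (le_max_right _ _)
  have habs : |max x 1 - max y 1| ≤ |x - y| := abs_max_sub_max_le_abs x y 1
  have e1 : |sa - sb| * (sa + sb) = |max x 1 - max y 1| := by
    rw [← abs_of_nonneg (show (0:ℝ) ≤ sa + sb by linarith), ← abs_mul]
    congr 1
    rw [← ha, ← hb]; ring
  nlinarith [abs_nonneg (sa - sb)]

lemma lipF (c : ℝ) : LipschitzWith 2 (fun x : ℝ => 2 * Real.sqrt 2 * Real.sqrt (max x 1) + c) := by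
  apply LipschitzWith.of_dist_le_mul
  intro x y
  rw [Real.dist_eq, Real.dist_eq]
  have h2 : Real.sqrt 2 ≤ 2 := by
    nlinarith [Real.sq_sqrt (show (0:ℝ) ≤ 2 by norm_num), Real.sqrt_nonneg 2]
  have h0 : (0:ℝ) ≤ Real.sqrt 2 := Real.sqrt_nonneg 2
  have key := sqrtmax_lip x y
  have e : 2 * Real.sqrt 2 * Real.sqrt (max x 1) + c - (2 * Real.sqrt 2 * Real.sqrt (max y 1) + c)
      = 2 * Real.sqrt 2 * (Real.sqrt (max x 1) - Real.sqrt (max y 1)) := by ring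
  rw [e, abs_mul, abs_of_nonneg (by linarith : (0:ℝ) ≤ 2 * Real.sqrt 2)]
  push_cast
  nlinarith [abs_nonneg (Real.sqrt (max x 1) - Real.sqrt (max y 1)), abs_nonneg (x - y)]

/-- Lemma 3.2.7 (Pingali): `(−∞, 2] ⊆ 𝒞`, i.e. for every `C ≤ 2` the solution `v_C` of
the IVP exists on all of `[1, m+1]`; moreover `v_C(m+1) → ∞` as `C → −∞`
(for every `R` there is a threshold `C'` such that every solution on `[1, m+1]` with
parameter `C ≤ C'` has `v(m+1) ≥ R`). -/
theorem stmt13 (m : ℝ) (hm : 0 < m) :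
    (∀ C : ℝ, C ≤ 2 → ∃ v : ℝ → ℝ, IsSolOn m C v (Set.Icc 1 (m + 1))) ∧
    (∀ R : ℝ, ∃ C' : ℝ, ∀ C : ℝ, C ≤ C' →
      ∀ v : ℝ → ℝ, IsSolOn m C v (Set.Icc 1 (m + 1)) → R ≤ v (m + 1)) := by
  have hM1 : (1:ℝ) < m + 1 := by linarith
  constructor
  · -- Existence for C ≤ 2
    intro C hC
    set Q : ℝ := |Acoef m C| * (m+1)^4/3 + |Bcoef m C| * (m+1)^3/2 + |C| * (m+1) with hQdef
    have hM0 : (0:ℝ) ≤ m + 1 := by linarith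
    have hQ0 : 0 ≤ Q := by
      rw [hQdef]
      have h4 : (0:ℝ) ≤ (m+1)^4 := by positivity
      have h3 : (0:ℝ) ≤ (m+1)^3 := pow_nonneg hM0 3
      have ha := abs_nonneg (Acoef m C)
      have hbb := abs_nonneg (Bcoef m C)
      have hcb := abs_nonneg C
      have := mul_nonneg ha h4
      have := mul_nonneg hbb h3
      have := mul_nonneg hcb hM0
      linarith
    have hqb : ∀ t ∈ Icc (1:ℝ) (m+1), |pC m C t * t| ≤ Q := by
      intro t ht
      obtain ⟨ht1, htM⟩ := ht
      have h0t : (0:ℝ) ≤ t := by linarith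
      calc |pC m C t * t|
          = |Acoef m C * t^4/3 + Bcoef m C * t^3/2 + C*t| := by unfold pC; congr 1; ring
        _ ≤ |Acoef m C * t^4/3 + Bcoef m C * t^3/2| + |C*t| := abs_add_le _ _
        _ ≤ |Acoef m C * t^4/3| + |Bcoef m C * t^3/2| + |C*t| := by
              linarith [abs_add_le (Acoef m C * t^4/3) (Bcoef m C * t^3/2)]
        _ = |Acoef m C| * t^4/3 + |Bcoef m C| * t^3/2 + |C| * t := by
              simp [abs_mul, abs_div, abs_pow, abs_of_nonneg h0t]
        _ ≤ Q := by
              rw [hQdef]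
              have h4 : t^4 ≤ (m+1)^4 := pow_le_pow_left₀ h0t htM 4
              have h3 : t^3 ≤ (m+1)^3 := pow_le_pow_left₀ h0t htM 3
              have ha := abs_nonneg (Acoef m C)
              have hbb := abs_nonneg (Bcoef m C)
              have hcb := abs_nonneg C
              have e4 := mul_le_mul_of_nonneg_left h4 ha
              have e3 := mul_le_mul_of_nonneg_left h3 hbb
              have e1 := mul_le_mul_of_nonneg_left htM hcb
              linarith
    set w : ℝ := Real.sqrt (3 + Q * m) with hwdef
    have hw0 : 0 ≤ w := Real.sqrt_nonneg _
    have hwsq : w^2 = 3 + Q*m := Real.sq_sqrt (by nlinarith [mul_nonneg hQ0 hm.le])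
    have h2sq : Real.sqrt 2 ^ 2 = 2 := Real.sq_sqrt (by norm_num)
    have h2nn : (0:ℝ) ≤ Real.sqrt 2 := Real.sqrt_nonneg 2
    set R : ℝ := 8*m^2 + 4*Real.sqrt 2*m*w + Q*m with hRdef
    have hR0 : 0 ≤ R := by
      rw [hRdef]
      have := mul_nonneg (mul_nonneg (by linarith : (0:ℝ) ≤ 4*Real.sqrt 2) hm.le) hw0
      have := mul_nonneg hQ0 hm.le
      nlinarith
    have hsR : Real.sqrt (R+3) = 2*Real.sqrt 2*m + w := by
      have hRe : R + 3 = (2*Real.sqrt 2*m + w)^2 := by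
        rw [hRdef]
        linear_combination (-(4*m^2)) * h2sq + (-1) * hwsq
      rw [hRe]
      exact Real.sqrt_sq (by nlinarith [mul_nonneg h2nn hm.le])
    set F : ℝ → ℝ → ℝ := fun t x => 2 * Real.sqrt 2 * Real.sqrt (max x 1) + pC m C t * t
      with hFdef
    have hPL : IsPicardLindelof F (tmin := 1) (tmax := m+1) ⟨1, le_refl 1, hM1.le⟩ 2 ⟨R, hR0⟩ 0
        ⟨2*Real.sqrt 2*Real.sqrt (R+3) + Q, add_nonneg (by positivity) hQ0⟩ 2 := by
      constructor
      · exact fun t _ => (lipF (pC m C t * t)).lipschitzOnWith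
      · intro x _
        have : Continuous fun t : ℝ => 2 * Real.sqrt 2 * Real.sqrt (max x 1) + pC m C t * t := by
          unfold pC; fun_prop
        exact this.continuousOn
      · intro t ht x hx
        rw [Real.norm_eq_abs]
        have h1 : |pC m C t * t| ≤ Q := hqb t ht
        have hx2 : x ≤ R + 2 := by
          have := mem_closedBall_iff_norm.mp hx
          change ‖x - 2‖ ≤ R at this
          rw [Real.norm_eq_abs] at this
          have := abs_le.mp this
          linarith [this.2]
        have hmax : max x 1 ≤ R + 3 := max_le (by linarith) (by linarith)
        have hs : Real.sqrt (max x 1) ≤ Real.sqrt (R+3) := Real.sqrt_le_sqrt hmax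
        have h0s : 0 ≤ Real.sqrt (max x 1) := Real.sqrt_nonneg _
        have hend : |2 * Real.sqrt 2 * Real.sqrt (max x 1)| = 2 * Real.sqrt 2 * Real.sqrt (max x 1) :=
          abs_of_nonneg (by positivity)
        calc |F t x| ≤ |2 * Real.sqrt 2 * Real.sqrt (max x 1)| + |pC m C t * t| := abs_add_le _ _
          _ = 2 * Real.sqrt 2 * Real.sqrt (max x 1) + |pC m C t * t| := by rw [hend]
          _ ≤ 2*Real.sqrt 2*Real.sqrt (R+3) + Q := by
              have := mul_le_mul_of_nonneg_left hs (by positivity : (0:ℝ) ≤ 2 * Real.sqrt 2)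
              linarith
      · have hmx : max ((m+1) - 1) (1 - (1:ℝ)) = m := by
          rw [show (m+1) - 1 = m by ring, show (1:ℝ) - 1 = 0 by ring]
          exact max_eq_left hm.le
        change (2*Real.sqrt 2*Real.sqrt (R+3) + Q) * max ((m+1) - 1) (1 - (1:ℝ)) ≤ R - 0
        rw [sub_zero]
        rw [hmx, hsR]
        have hCm : (2*Real.sqrt 2*(2*Real.sqrt 2*m + w) + Q)*m
            = 8*m^2 + 2*Real.sqrt 2*m*w + Q*m := by
          linear_combination (4*m^2) * h2sq
        rw [hRdef]
        have hnn : 0 ≤ 2*Real.sqrt 2*m*w :=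
          mul_nonneg (mul_nonneg (by linarith) hm.le) hw0
        nlinarith [hCm]
    obtain ⟨f, hf1', hfd⟩ := hPL.exists_eq_forall_mem_Icc_hasDerivWithinAt₀
    have hf1 : f 1 = 2 := hf1'
    -- barrier: f ≥ ψ - 1 where ψ(γ) = 2 + P(γ) - P(1)
    set φ : ℝ → ℝ := fun γ => 2 + (Pfun m C γ - Pfun m C 1) - 1 with hφdef
    have hφd : ∀ γ ∈ Icc (1:ℝ) (m+1),
        HasDerivWithinAt φ (pC m C γ * γ) (Icc 1 (m+1)) γ := by
      intro γ _
      exact ((((hasDerivAt_Pfun m C γ).sub_const (Pfun m C 1)).const_add 2).sub_const 1).hasDerivWithinAt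
    have hφval : ∀ γ ∈ Icc (1:ℝ) (m+1), 1 ≤ φ γ := by
      intro γ hγ
      have := Pfun_sub_nonneg m C γ hm hC hγ.1 hγ.2
      rw [hφdef]; dsimp only; linarith
    have hbar : ∀ γ ∈ Icc (1:ℝ) (m+1), φ γ ≤ f γ := by
      apply barrier hM1 f φ (fun γ => F γ (f γ)) (fun γ => pC m C γ * γ) hfd hφd
      · rw [hf1, hφdef]; dsimp only; nlinarith
      · intro γ hγ _
        have h1 : 1 ≤ Real.sqrt (max (f γ) 1) := Real.one_le_sqrt.mpr (le_max_right _ _)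
        have h2 : (0:ℝ) < Real.sqrt 2 := Real.sqrt_pos.mpr (by norm_num)
        rw [hFdef]; dsimp only
        nlinarith
    refine ⟨f, hf1, fun γ hγ => ?_⟩
    have h1f : 1 ≤ f γ := le_trans (hφval γ hγ) (hbar γ hγ)
    refine ⟨by linarith, ?_⟩
    have h2 := hfd γ hγ
    have he : odeRHS m C f γ = F γ (f γ) := by
      rw [hFdef]; unfold odeRHS; dsimp only
      rw [max_eq_left h1f]
    rw [he]
    exact h2
  · -- Blow-up of v(m+1) as C → −∞
    intro R
    have hc1pos : (0:ℝ) < m ^ 3 / (2 * (m + 1) ^ 2) := by positivity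
    refine ⟨2 - max (R - 1) 0 / (m ^ 3 / (2 * (m + 1) ^ 2)), fun C hCle v hv => ?_⟩
    have hmaxnn : (0:ℝ) ≤ max (R - 1) 0 := le_max_right _ _
    have hdivnn : 0 ≤ max (R - 1) 0 / (m ^ 3 / (2 * (m + 1) ^ 2)) :=
      div_nonneg hmaxnn hc1pos.le
    have hC2 : C ≤ 2 := by linarith
    obtain ⟨hv1, hvd⟩ := hv
    set φ : ℝ → ℝ := fun γ => 2 + (Pfun m C γ - Pfun m C 1) - 1 with hφdef
    have hφd : ∀ γ ∈ Icc (1:ℝ) (m+1),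
        HasDerivWithinAt φ (pC m C γ * γ) (Icc 1 (m+1)) γ := by
      intro γ _
      exact ((((hasDerivAt_Pfun m C γ).sub_const (Pfun m C 1)).const_add 2).sub_const 1).hasDerivWithinAt
    have hφval : ∀ γ ∈ Icc (1:ℝ) (m+1), 1 ≤ φ γ := by
      intro γ hγ
      have := Pfun_sub_nonneg m C γ hm hC2 hγ.1 hγ.2
      rw [hφdef]; dsimp only; linarith
    have hbar : ∀ γ ∈ Icc (1:ℝ) (m+1), φ γ ≤ v γ := by
      apply barrier hM1 v φ (fun γ => odeRHS m C v γ) (fun γ => pC m C γ * γ)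
        (fun γ hγ => (hvd γ hγ).2) hφd
      · rw [hv1, hφdef]; dsimp only; nlinarith
      · intro γ hγ heq
        have h1v : 1 ≤ v γ := by rw [heq]; exact hφval γ hγ
        have h1 : 1 ≤ Real.sqrt (v γ) := Real.one_le_sqrt.mpr h1v
        have h2 : (0:ℝ) < Real.sqrt 2 := Real.sqrt_pos.mpr (by norm_num)
        unfold odeRHS
        nlinarith
    have hMmem : (m+1) ∈ Icc (1:ℝ) (m+1) := ⟨by linarith, le_refl _⟩
    have hbM := hbar (m+1) hMmem
    have hPM := Pfun_M_lower m C hm hC2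
    -- (2 - C) * c1 ≥ max (R-1) 0
    have hkey : max (R - 1) 0 ≤ (2 - C) * (m ^ 3 / (2 * (m + 1) ^ 2)) := by
      have h1 : max (R - 1) 0 / (m ^ 3 / (2 * (m + 1) ^ 2)) ≤ 2 - C := by linarith
      calc max (R - 1) 0
          = (max (R - 1) 0 / (m ^ 3 / (2 * (m + 1) ^ 2))) * (m ^ 3 / (2 * (m + 1) ^ 2)) := by
            field_simp
        _ ≤ (2 - C) * (m ^ 3 / (2 * (m + 1) ^ 2)) :=
            mul_le_mul_of_nonneg_right h1 hc1pos.le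
    have hR1 : R - 1 ≤ (2 - C) * (m ^ 3 / (2 * (m + 1) ^ 2)) :=
      le_trans (le_max_left _ _) hkey
    have : φ (m+1) = 2 + (Pfun m C (m+1) - Pfun m C 1) - 1 := by rw [hφdef]
    linarith
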